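/- If a dataset of N tuples (N a multiple of ℓ') is eligible, i.e., the maximum frequency of any sensitive value is at most N/ℓ', then there exists a partition of the tuples into N/ℓ' groups of size ℓ' such that within each group all ℓ' sensitive values are distinct. -/

import Mathlib

lemma card_residue_aux (N g ℓ' : ℕ) (hN : N = g * ℓ') (hg : 0 < g) (k : ℕ) (hk : k < g) :
    (Finset.univ.filter (fun m : Fin N => (m : ℕ) % g = k)).card = ℓ' := by
  subst hN
  refine Eq.trans (Finset.card_bij'
    (fun m _ => (⟨(m : ℕ) / g, by
      have hm := m.2
      exact (Nat.div_lt_iff_lt_mul hg).2 (mul_comm g ℓ' ▸ hm)⟩ : Fin ℓ'))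
    (fun t _ => (⟨(t : ℕ) * g + k, by
      have ht := t.2
      calc (t : ℕ) * g + k < (t : ℕ) * g + g := by omega
        _ = ((t : ℕ) + 1) * g := by ring
        _ ≤ ℓ' * g := Nat.mul_le_mul_right g ht
        _ = g * ℓ' := mul_comm _ _⟩ : Fin (g * ℓ')))
    (fun a ha => Finset.mem_univ _) ?_ ?_ ?_) (Finset.card_fin ℓ')
  · intro t ht
    simp only [Finset.mem_filter, Finset.mem_univ, true_and]
    rw [add_comm, Nat.add_mul_mod_self_right, Nat.mod_eq_of_lt hk]
  · intro m hm
    simp only [Finset.mem_filter, Finset.mem_univ, true_and] at hm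
    apply Fin.ext
    simp only
    conv_rhs => rw [← Nat.div_add_mod (m : ℕ) g, hm, Nat.mul_comm]
  · intro t ht
    apply Fin.ext
    simp only
    rw [add_comm, Nat.add_mul_div_right _ _ hg, Nat.div_eq_of_lt hk, zero_add]

/-- If a dataset of `N = g·ℓ'` tuples is eligible (each sensitive value occurs at most
`N/ℓ' = g` times), then the tuples can be partitioned into `g` groups of size `ℓ'` such
that within each group all `ℓ'` sensitive values are distinct. -/
theorem eligible_partition_exists
    (N ℓ' g : ℕ) (hN : N = g * ℓ') (hℓ : 0 < ℓ')
    (S : Type) [DecidableEq S] (sv : Fin N → S)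
    (helig : ∀ s : S, (Finset.univ.filter (fun i => sv i = s)).card ≤ g) :
    ∃ P : Fin N → Fin g,
      (∀ k : Fin g, (Finset.univ.filter (fun i => P i = k)).card = ℓ') ∧
      (∀ i j, P i = P j → sv i = sv j → i = j) := by
  rcases Nat.eq_zero_or_pos g with hg | hg
  · -- g = 0 ⇒ N = 0, everything vacuous
    subst hg
    simp only [Nat.zero_mul] at hN
    subst hN
    exact ⟨fun i => i.elim0, fun k => k.elim0, fun i => i.elim0⟩
  · -- rank function f determined by sv
    set L : List S := (Finset.univ.image sv).toList with hL
    have hmem : ∀ i : Fin N, sv i ∈ L := by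
      intro i
      rw [hL, Finset.mem_toList]
      exact Finset.mem_image_of_mem sv (Finset.mem_univ i)
    set f : Fin N → ℕ := fun i => L.idxOf (sv i) with hfdef
    have hf : ∀ i j : Fin N, f i = f j ↔ sv i = sv j := fun i j =>
      List.idxOf_inj (hmem i)
    set σ : Equiv.Perm (Fin N) := Tuple.sort f with hσ
    have hmono : Monotone (f ∘ σ) := Tuple.monotone_sort f
    -- the partition
    refine ⟨fun i => ⟨((σ.symm i : Fin N) : ℕ) % g, Nat.mod_lt _ hg⟩, ?_, ?_⟩
    · intro k
      have h1 : Finset.univ.filter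
          (fun i : Fin N => (⟨((σ.symm i : Fin N) : ℕ) % g, Nat.mod_lt _ hg⟩ : Fin g) = k)
          = (Finset.univ.filter (fun m : Fin N => (m : ℕ) % g = (k : ℕ))).map
            σ.toEmbedding := by
        ext i
        simp only [Finset.mem_filter, Finset.mem_univ, true_and, Finset.mem_map,
          Equiv.coe_toEmbedding]
        constructor
        · intro h
          exact ⟨σ.symm i, congrArg Fin.val h, σ.apply_symm_apply i⟩
        · rintro ⟨m, hm, rfl⟩
          apply Fin.ext
          simpa using hm
      rw [h1, Finset.card_map, card_residue_aux N g ℓ' hN hg (k : ℕ) k.2]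
    · intro i j hP hsv
      have key : ∀ a b : Fin N, a ≤ b → sv (σ a) = sv (σ b) → (a : ℕ) % g = (b : ℕ) % g →
          a = b := by
        intro a b hab hsvab hmod
        -- all tuples in positions [a,b] share the same sensitive value
        have hconst : ∀ m ∈ Finset.Icc a b, sv (σ m) = sv (σ a) := by
          intro m hm
          rw [Finset.mem_Icc] at hm
          have hfab : f (σ a) = f (σ b) := (hf _ _).2 hsvab
          have h1 : f (σ a) ≤ f (σ m) := hmono hm.1
          have h2 : f (σ m) ≤ f (σ b) := hmono hm.2
          exact (hf _ _).1 (by omega)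
        have hsub : Finset.Icc a b ⊆
            Finset.univ.filter (fun m : Fin N => sv (σ m) = sv (σ a)) := by
          intro m hm
          simp only [Finset.mem_filter, Finset.mem_univ, true_and]
          exact hconst m hm
        have hcard : (Finset.univ.filter (fun m : Fin N => sv (σ m) = sv (σ a))).card ≤ g := by
          have heq : Finset.univ.filter (fun m : Fin N => sv (σ m) = sv (σ a))
              = (Finset.univ.filter (fun i : Fin N => sv i = sv (σ a))).map
                σ.symm.toEmbedding := by
            ext m
            simp only [Finset.mem_filter, Finset.mem_univ, true_and, Finset.mem_map,
              Equiv.coe_toEmbedding]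
            constructor
            · intro h
              exact ⟨σ m, h, σ.symm_apply_apply m⟩
            · rintro ⟨n, hn, rfl⟩
              simpa using hn
          rw [heq, Finset.card_map]
          exact helig (sv (σ a))
        have hIcc : (Finset.Icc a b).card = (b : ℕ) + 1 - (a : ℕ) := Fin.card_Icc a b
        have hle : (b : ℕ) + 1 - (a : ℕ) ≤ g := by
          rw [← hIcc]
          exact le_trans (Finset.card_le_card hsub) hcard
        have hdvd : g ∣ (b : ℕ) - (a : ℕ) :=
          (Nat.modEq_iff_dvd' hab).1 hmod
        have hab' : (a : ℕ) ≤ (b : ℕ) := hab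
        have : (b : ℕ) - (a : ℕ) = 0 := by
          rcases Nat.eq_zero_or_pos ((b : ℕ) - (a : ℕ)) with h | h
          · exact h
          · exact absurd (Nat.le_of_dvd h hdvd) (by omega)
        exact Fin.ext (by omega)
      set a := σ.symm i with ha
      set b := σ.symm j with hb
      have hmod : (a : ℕ) % g = (b : ℕ) % g := by
        have := congrArg Fin.val hP
        simpa using this
      have hsvab : sv (σ a) = sv (σ b) := by
        rw [ha, hb, σ.apply_symm_apply, σ.apply_symm_apply]; exact hsv
      have hab : a = b := by
        rcases le_total a b with h | h
        · exact key a b h hsvab hmod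
        · exact (key b a h hsvab.symm hmod.symm).symm
      have : σ a = σ b := congrArg σ hab
      rwa [ha, hb, σ.apply_symm_apply, σ.apply_symm_apply] at this
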